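/- For any finite metric space (X, D) with opening cost f_i > 0 at each point x_i, there exists a unique nonnegative real r_i such that the sum over all y in the closed ball B(x_i, r_i) of (r_i - D(x_i, y)) equals f_i. -/
import Mathlib


open Finset

open scoped Classical in
/-- For any finite metric space with opening cost `f x > 0` at each point, there is a
unique nonnegative real `r` such that `∑_{y ∈ B(x,r)} (r - D(x,y)) = f x`. -/
theorem unique_characteristic_radius {X : Type*} [Fintype X] [MetricSpace X]
    (f : X → ℝ) (hf : ∀ x, 0 < f x) (x : X) :
    ∃! r : ℝ, 0 ≤ r ∧
      ∑ y ∈ univ.filter (fun y => dist x y ≤ r), (r - dist x y) = f x := by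
  classical
  set G : ℝ → ℝ := fun r => ∑ y : X, max (r - dist x y) 0 with hG
  have hsum : ∀ r : ℝ,
      ∑ y ∈ univ.filter (fun y => dist x y ≤ r), (r - dist x y) = G r := by
    intro r
    rw [hG, Finset.sum_filter]
    refine Finset.sum_congr rfl fun y _ => ?_
    by_cases h : dist x y ≤ r
    · simp [h, max_eq_left (by linarith : (0:ℝ) ≤ r - dist x y)]
    · push_neg at h
      simp [not_le.mpr h, max_eq_right (by linarith : r - dist x y ≤ 0)]
  have hGcont : Continuous G := by
    apply continuous_finset_sum
    intro y _
    exact (continuous_id.sub continuous_const).max continuous_const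
  have hG0 : G 0 = 0 := by
    refine Finset.sum_eq_zero fun y _ => ?_
    have := dist_nonneg (x := x) (y := y)
    exact max_eq_right (by linarith)
  have hGge : ∀ r : ℝ, 0 ≤ r → r ≤ G r := by
    intro r hr
    have h1 : max (r - dist x x) 0 ≤ G r := by
      refine Finset.single_le_sum (f := fun y => max (r - dist x y) 0) (fun y _ => le_max_right _ _) (Finset.mem_univ x)
    rw [dist_self, sub_zero, max_eq_left hr] at h1
    exact h1
  have hGmono : ∀ a b : ℝ, 0 ≤ a → a < b → G a < G b := by
    intro a b ha hab
    refine Finset.sum_lt_sum (fun y _ => ?_) ⟨x, Finset.mem_univ x, ?_⟩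
    · exact max_le_max (by linarith) le_rfl
    · rw [dist_self, sub_zero, sub_zero, max_eq_left ha, max_eq_left (by linarith)]
      exact hab
  -- existence via IVT
  have hx := hf x
  have hsub := intermediate_value_Icc (le_of_lt hx) hGcont.continuousOn
  have hmem : f x ∈ Set.Icc (G 0) (G (f x)) := by
    rw [hG0]
    exact ⟨le_of_lt hx, hGge _ (le_of_lt hx)⟩
  obtain ⟨r, hrIcc, hGr⟩ := hsub hmem
  refine ⟨r, ⟨hrIcc.1, by rw [hsum]; exact hGr⟩, ?_⟩
  intro s hs
  have hGs : G s = f x := by rw [← hsum]; exact hs.2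
  by_contra hne
  rcases lt_or_gt_of_ne hne with h | h
  · have := hGmono s r hs.1 h
    rw [hGs, hGr] at this; exact lt_irrefl _ this
  · have := hGmono r s hrIcc.1 h
    rw [hGs, hGr] at this; exact lt_irrefl _ this
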